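/- Let n ≥ 1 and let A be a real n×n matrix possessing the strong Perron–Frobenius property. Then the matrix exponential exp(A) possesses the strong Perron–Frobenius property. -/

import Mathlib

open Polynomial Matrix

/-- The spectral radius of a real matrix: the maximum of the moduli of the complex
roots of its characteristic polynomial. -/
noncomputable def specRadius {n : ℕ} (A : Matrix (Fin n) (Fin n) ℝ) : ℝ :=
  (((A.charpoly.map (algebraMap ℝ ℂ)).roots.map (fun z => ‖z‖₊)).sup : NNReal)

/-- The strong Perron–Frobenius property for a real matrix. -/
def HasStrongPF {n : ℕ} (A : Matrix (Fin n) (Fin n) ℝ) : Prop :=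
  0 < specRadius A ∧
  (A.charpoly.map (algebraMap ℝ ℂ)).rootMultiplicity (specRadius A : ℂ) = 1 ∧
  (∃ x : Fin n → ℝ, (∀ i, 0 < x i) ∧ A.mulVec x = (specRadius A) • x) ∧
  (∀ μ ∈ (A.charpoly.map (algebraMap ℝ ℂ)).roots,
      μ ≠ (specRadius A : ℂ) → ‖μ‖ < specRadius A)

/-- Eventual positivity of a real matrix. -/
def EventuallyPos {n : ℕ} (A : Matrix (Fin n) (Fin n) ℝ) : Prop :=
  ∃ p : ℕ, ∀ k ≥ p, ∀ i j, 0 < (A ^ k) i j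

section PFAuxSection
open Filter


namespace PFAux

lemma prod_map_neg (s : Multiset ℂ) (f : ℂ → ℂ) :
    (s.map (fun a => -f a)).prod = (-1) ^ (Multiset.card s) * (s.map f).prod := by
  induction s using Multiset.induction_on with
  | empty => simp
  | cons a s ih => simp [ih, pow_succ]; ring

lemma prod_map_swap (s t : Multiset ℂ) (f : ℂ → ℂ → ℂ) :
    (s.map (fun μ => (t.map (fun l => f l μ)).prod)).prod
      = (t.map (fun l => (s.map (fun μ => f l μ)).prod)).prod := by
  induction s using Multiset.induction_on with
  | empty => simp
  | cons a s ih => simp [ih, ← Multiset.prod_map_mul]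

lemma prod_map_const_mul (s : Multiset ℂ) (c : ℂ) (g : ℂ → ℂ) :
    (s.map (fun l => c * g l)).prod = c ^ (Multiset.card s) * (s.map g).prod := by
  induction s using Multiset.induction_on with
  | empty => simp
  | cons a s ih => simp [ih, pow_succ]; ring

lemma card_roots_charpoly {n : ℕ} (M : Matrix (Fin n) (Fin n) ℂ) :
    Multiset.card M.charpoly.roots = n := by
  rw [(Polynomial.splits_iff_card_roots).mp (IsAlgClosed.splits _),
    Matrix.charpoly_natDegree_eq_dim, Fintype.card_fin]

lemma charpoly_eq_prod {n : ℕ} (M : Matrix (Fin n) (Fin n) ℂ) :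
    M.charpoly = (M.charpoly.roots.map (fun a => X - C a)).prod :=
  (prod_multiset_X_sub_C_of_monic_of_roots_card_eq M.charpoly_monic (by
    rw [(Polynomial.splits_iff_card_roots).mp (IsAlgClosed.splits _)])).symm

lemma eval_charpoly {n : ℕ} (M : Matrix (Fin n) (Fin n) ℂ) (z : ℂ) :
    M.charpoly.eval z = (Matrix.diagonal (fun _ => z) - M).det := by
  rw [Matrix.charpoly, ← coe_evalRingHom, RingHom.map_det]
  congr 1
  ext i j
  rcases eq_or_ne i j with rfl | h
  · simp [charmatrix_apply_eq]
  · simp [charmatrix_apply_ne _ _ _ h, Matrix.diagonal_apply_ne _ h]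

lemma det_sub_diag {n : ℕ} (M : Matrix (Fin n) (Fin n) ℂ) (μ : ℂ) :
    (M - Matrix.diagonal (fun _ => μ)).det
      = (M.charpoly.roots.map (fun l => l - μ)).prod := by
  have h1 : (Matrix.diagonal (fun _ : Fin n => μ) - M).det
      = (M.charpoly.roots.map (fun l => μ - l)).prod := by
    rw [← eval_charpoly]
    conv_lhs => rw [charpoly_eq_prod M]
    rw [eval_multiset_prod, Multiset.map_map]
    simp [Function.comp]
  have h2 : M - Matrix.diagonal (fun _ : Fin n => μ)
      = -(Matrix.diagonal (fun _ : Fin n => μ) - M) := by rw [neg_sub]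
  rw [h2, Matrix.det_neg, h1, Fintype.card_fin]
  have h3 : (fun l : ℂ => l - μ) = (fun l : ℂ => -(μ - l)) := by funext l; ring
  rw [h3, prod_map_neg, card_roots_charpoly]

lemma det_aeval_prod {n : ℕ} (M : Matrix (Fin n) (Fin n) ℂ) (S : Multiset ℂ) :
    (Polynomial.aeval M ((S.map fun a => X - C a).prod)).det
      = (S.map (fun μ => (M - Matrix.diagonal (fun _ => μ)).det)).prod := by
  induction S using Multiset.induction_on with
  | empty => simp
  | cons a S ih =>
      rw [Multiset.map_cons, Multiset.prod_cons, _root_.map_mul, Matrix.det_mul,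
        Multiset.map_cons, Multiset.prod_cons, ih]
      congr 2
      rw [map_sub, aeval_X, aeval_C]
      simp [Matrix.algebraMap_eq_diagonal]

lemma det_aeval {n : ℕ} (M : Matrix (Fin n) (Fin n) ℂ) (q : Polynomial ℂ) :
    (Polynomial.aeval M q).det = (M.charpoly.roots.map (fun l => q.eval l)).prod := by
  have hfac := (IsAlgClosed.splits q).eq_prod_roots
  have heval : ∀ l : ℂ, q.eval l
      = q.leadingCoeff * ((q.roots.map (fun a => l - a)).prod) := by
    intro l
    conv_lhs => rw [hfac]
    rw [eval_mul, eval_C, eval_multiset_prod, Multiset.map_map]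
    simp [Function.comp]
  conv_lhs => rw [hfac]
  rw [_root_.map_mul, Matrix.det_mul, aeval_C, det_aeval_prod]
  have hc : ((algebraMap ℂ (Matrix (Fin n) (Fin n) ℂ)) q.leadingCoeff).det
      = q.leadingCoeff ^ n := by
    simp [Matrix.algebraMap_eq_diagonal, Matrix.det_diagonal]
  rw [hc]
  have h4 : (Multiset.map (fun μ => (M - Matrix.diagonal fun _ => μ).det) q.roots).prod
      = (M.charpoly.roots.map (fun l => (q.roots.map (fun μ => l - μ)).prod)).prod := by
    have := prod_map_swap q.roots M.charpoly.roots (fun l μ => l - μ)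
    rw [← this]
    congr 1
    exact Multiset.map_congr rfl (fun μ _ => det_sub_diag M μ)
  rw [h4]
  conv_rhs => rw [Multiset.map_congr rfl (fun l _ => heval l)]
  rw [prod_map_const_mul, card_roots_charpoly]




lemma multiset_prod_tendsto (s : Multiset ℂ) (F : ℕ → ℂ → ℂ) (G : ℂ → ℂ)
    (h : ∀ a ∈ s, Tendsto (fun k => F k a) atTop (nhds (G a))) :
    Tendsto (fun k => (s.map (F k)).prod) atTop (nhds ((s.map G).prod)) := by
  induction s using Multiset.induction_on with
  | empty => simpa using tendsto_const_nhds
  | cons a s ih =>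
      simp only [Multiset.map_cons, Multiset.prod_cons]
      exact (h a (Multiset.mem_cons_self a s)).mul
        (ih (fun b hb => h b (Multiset.mem_cons_of_mem hb)))

lemma charpoly_exp {n : ℕ} (B : Matrix (Fin n) (Fin n) ℂ) :
    (NormedSpace.exp B).charpoly
      = (B.charpoly.roots.map (fun l => X - C (Complex.exp l))).prod := by
  letI : SeminormedRing (Matrix (Fin n) (Fin n) ℂ) := Matrix.linftyOpSemiNormedRing
  letI : NormedRing (Matrix (Fin n) (Fin n) ℂ) := Matrix.linftyOpNormedRing
  letI : NormedAlgebra ℂ (Matrix (Fin n) (Fin n) ℂ) := Matrix.linftyOpNormedAlgebra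
  apply Polynomial.funext
  intro z
  rw [eval_charpoly]
  have hRHS : ((B.charpoly.roots.map (fun l => X - C (Complex.exp l))).prod).eval z
      = (B.charpoly.roots.map (fun l => z - Complex.exp l)).prod := by
    rw [eval_multiset_prod, Multiset.map_map]
    simp [Function.comp]
  rw [hRHS]
  set p : ℕ → Polynomial ℂ :=
    fun k => ∑ j ∈ Finset.range k, Polynomial.C ((j.factorial : ℂ)⁻¹) * X ^ j with hp
  have hsum : HasSum (fun j : ℕ => ((j.factorial : ℂ)⁻¹) • B ^ j) (NormedSpace.exp B) :=
    NormedSpace.exp_series_hasSum_exp' B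
  have htend : Tendsto (fun k => Polynomial.aeval B (p k)) atTop (nhds (NormedSpace.exp B)) := by
    have h := hsum.tendsto_sum_nat
    convert h using 2 with k
    rw [hp, map_sum]
    refine Finset.sum_congr rfl (fun j _ => ?_)
    rw [_root_.map_mul, aeval_C, map_pow, aeval_X, Algebra.smul_def]
  have hcont : Continuous (fun M : Matrix (Fin n) (Fin n) ℂ =>
      (Matrix.diagonal (fun _ : Fin n => z) - M).det) :=
    (continuous_const.sub continuous_id).matrix_det
  have h1 : Tendsto (fun k => (Matrix.diagonal (fun _ : Fin n => z) - Polynomial.aeval B (p k)).det)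
      atTop (nhds ((Matrix.diagonal (fun _ : Fin n => z) - NormedSpace.exp B).det)) :=
    (hcont.tendsto _).comp htend
  have h2 : ∀ k, (Matrix.diagonal (fun _ : Fin n => z) - Polynomial.aeval B (p k)).det
      = (B.charpoly.roots.map (fun l => z - (p k).eval l)).prod := by
    intro k
    have hd : Matrix.diagonal (fun _ : Fin n => z) - Polynomial.aeval B (p k)
        = Polynomial.aeval B (C z - p k) := by
      rw [map_sub, aeval_C]
      simp [Matrix.algebraMap_eq_diagonal]
    rw [hd, det_aeval]
    exact congrArg _ (Multiset.map_congr rfl (fun l _ => by simp))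
  have h3 : Tendsto (fun k => (B.charpoly.roots.map (fun l => z - (p k).eval l)).prod)
      atTop (nhds ((B.charpoly.roots.map (fun l => z - Complex.exp l)).prod)) := by
    refine multiset_prod_tendsto _ _ _ (fun l _ => ?_)
    have hs : HasSum (fun j : ℕ => ((j.factorial : ℂ)⁻¹) • l ^ j) (Complex.exp l) := by
      rw [Complex.exp_eq_exp_ℂ]
      exact NormedSpace.exp_series_hasSum_exp' l
    have h := hs.tendsto_sum_nat
    have heq : ∀ k, (p k).eval l = ∑ j ∈ Finset.range k, ((j.factorial : ℂ)⁻¹) • l ^ j := by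
      intro k
      rw [hp, eval_finset_sum]
      exact Finset.sum_congr rfl (fun j _ => by simp [smul_eq_mul])
    refine Tendsto.sub tendsto_const_nhds ?_
    simpa [heq] using h
  have h1' : Tendsto (fun k => (B.charpoly.roots.map (fun l => z - (p k).eval l)).prod)
      atTop (nhds ((Matrix.diagonal (fun _ : Fin n => z) - NormedSpace.exp B).det)) := by
    refine h1.congr (fun k => h2 k)
  exact tendsto_nhds_unique h1' h3


end PFAux


lemma exp_map_complex {n : ℕ} (A : Matrix (Fin n) (Fin n) ℝ) :
    (NormedSpace.exp A).map (algebraMap ℝ ℂ)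
      = NormedSpace.exp (A.map (algebraMap ℝ ℂ)) := by
  letI : SeminormedRing (Matrix (Fin n) (Fin n) ℝ) := Matrix.linftyOpSemiNormedRing
  letI : NormedRing (Matrix (Fin n) (Fin n) ℝ) := Matrix.linftyOpNormedRing
  letI : NormedAlgebra ℝ (Matrix (Fin n) (Fin n) ℝ) := Matrix.linftyOpNormedAlgebra
  letI : SeminormedRing (Matrix (Fin n) (Fin n) ℂ) := Matrix.linftyOpSemiNormedRing
  letI : NormedRing (Matrix (Fin n) (Fin n) ℂ) := Matrix.linftyOpNormedRing
  letI : NormedAlgebra ℝ (Matrix (Fin n) (Fin n) ℂ) := Matrix.linftyOpNormedAlgebra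
  have hc : Continuous ((algebraMap ℝ ℂ).mapMatrix :
      Matrix (Fin n) (Fin n) ℝ →+* Matrix (Fin n) (Fin n) ℂ) := by
    show Continuous fun M : Matrix (Fin n) (Fin n) ℝ => M.map (algebraMap ℝ ℂ)
    exact continuous_id.matrix_map (continuous_algebraMap ℝ ℂ)
  letI : NormedAlgebra ℚ (Matrix (Fin n) (Fin n) ℝ) := NormedAlgebra.restrictScalars ℚ ℝ _
  have h := NormedSpace.map_exp ((algebraMap ℝ ℂ).mapMatrix) hc A
  rw [RingHom.mapMatrix_apply, RingHom.mapMatrix_apply] at h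
  exact h

end PFAuxSection

/-- The matrix exponential preserves the strong Perron–Frobenius property. -/
theorem strongPF_exp {n : ℕ} (hn : 1 ≤ n) (A : Matrix (Fin n) (Fin n) ℝ)
    (hA : HasStrongPF A) :
    HasStrongPF (NormedSpace.exp A) := by
  classical
  obtain ⟨hpos, hmult, ⟨x, hxpos, hxeig⟩, hdom⟩ := hA
  set ρ := specRadius A with hρ
  set R := (A.charpoly.map (algebraMap ℝ ℂ)).roots with hR
  have hchar : (NormedSpace.exp A).charpoly.map (algebraMap ℝ ℂ)
      = (R.map (fun l => X - C (Complex.exp l))).prod := by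
    rw [← Matrix.charpoly_map, exp_map_complex, PFAux.charpoly_exp, Matrix.charpoly_map]
  have hroots : ((NormedSpace.exp A).charpoly.map (algebraMap ℝ ℂ)).roots
      = R.map Complex.exp := by
    have hmm : (R.map (fun l => X - C (Complex.exp l)))
        = ((R.map Complex.exp).map (fun a => X - C a)) := by
      rw [Multiset.map_map]; rfl
    rw [hchar, hmm, Polynomial.roots_multiset_prod_X_sub_C]
  have hmem : (ρ : ℂ) ∈ R := by
    apply Multiset.count_pos.mp
    rw [hR, Polynomial.count_roots, hmult]
    norm_num
  have hboundA : ∀ l ∈ R, ‖l‖ ≤ ρ := by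
    intro l hl
    have h1 : ‖l‖₊ ≤ (R.map fun z => ‖z‖₊).sup :=
      Multiset.le_sup (Multiset.mem_map_of_mem _ hl)
    have h2 : (‖l‖₊ : ℝ) ≤ ρ := by
      rw [hρ]
      unfold specRadius
      exact_mod_cast h1
    simpa [coe_nnnorm] using h2
  have hsup : ((R.map Complex.exp).map (fun z => ‖z‖₊)).sup = ‖Complex.exp (ρ : ℂ)‖₊ := by
    apply le_antisymm
    · apply Multiset.sup_le.mpr
      intro b hb
      obtain ⟨w, hw, rfl⟩ := Multiset.mem_map.mp hb
      obtain ⟨l, hl, rfl⟩ := Multiset.mem_map.mp hw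
      rw [← NNReal.coe_le_coe, coe_nnnorm, coe_nnnorm,
        Complex.norm_exp, Complex.norm_exp, Complex.ofReal_re]
      exact Real.exp_le_exp.mpr (le_trans (Complex.re_le_norm l) (hboundA l hl))
    · exact Multiset.le_sup
        (Multiset.mem_map_of_mem _ (Multiset.mem_map_of_mem _ hmem))
  have hspec : specRadius (NormedSpace.exp A) = Real.exp ρ := by
    unfold specRadius
    rw [hroots, hsup, coe_nnnorm, Complex.norm_exp, Complex.ofReal_re]
  have hofreal : ((Real.exp ρ : ℝ) : ℂ) = Complex.exp (ρ : ℂ) := Complex.ofReal_exp ρ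
  have habslt : ∀ a ∈ R, a ≠ (ρ : ℂ) → ‖Complex.exp a‖ < Real.exp ρ := by
    intro a ha hne
    rw [Complex.norm_exp]
    exact Real.exp_lt_exp.mpr (lt_of_le_of_lt (Complex.re_le_norm a) (hdom a ha hne))
  refine ⟨?_, ?_, ?_, ?_⟩
  · rw [hspec]; exact Real.exp_pos ρ
  · rw [hspec, hofreal, ← Polynomial.count_roots, hroots, Multiset.count_map]
    have hfc : ∀ a ∈ R, (Complex.exp (ρ:ℂ) = Complex.exp a) ↔ ((ρ:ℂ) = a) := by
      intro a ha
      constructor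
      · intro h
        by_contra hne
        have h1 := habslt a ha (fun h' => hne h'.symm)
        rw [← h, Complex.norm_exp, Complex.ofReal_re] at h1
        exact lt_irrefl _ h1
      · intro h; rw [h]
    rw [Multiset.filter_congr hfc, ← Multiset.count_eq_card_filter_eq,
      hR, Polynomial.count_roots, hmult]
  · refine ⟨x, hxpos, ?_⟩
    rw [hspec]
    letI : SeminormedRing (Matrix (Fin n) (Fin n) ℝ) := Matrix.linftyOpSemiNormedRing
    letI : NormedRing (Matrix (Fin n) (Fin n) ℝ) := Matrix.linftyOpNormedRing
    letI : NormedAlgebra ℝ (Matrix (Fin n) (Fin n) ℝ) := Matrix.linftyOpNormedAlgebra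
    have hpow : ∀ j : ℕ, (A ^ j).mulVec x = (ρ ^ j) • x := by
      intro j
      induction j with
      | zero => simp [Matrix.one_mulVec]
      | succ j ih =>
          rw [pow_succ', ← Matrix.mulVec_mulVec, ih, Matrix.mulVec_smul, hxeig,
            smul_smul, pow_succ]
    let f : Matrix (Fin n) (Fin n) ℝ →ₗ[ℝ] (Fin n → ℝ) :=
      { toFun := fun M => M.mulVec x
        map_add' := fun M N => Matrix.add_mulVec M N x
        map_smul' := fun c M => Matrix.smul_mulVec c M x }
    have hfc : Continuous f := f.continuous_of_finiteDimensional
    have hsum : HasSum (fun j : ℕ => ((j.factorial : ℝ))⁻¹ • A ^ j) (NormedSpace.exp A) :=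
      NormedSpace.exp_series_hasSum_exp' A
    have h2 := hsum.map f hfc
    have h3 : ∀ j : ℕ, f (((j.factorial : ℝ))⁻¹ • A ^ j)
        = (((j.factorial : ℝ))⁻¹ • ρ ^ j) • x := by
      intro j
      have hf : f (((j.factorial : ℝ))⁻¹ • A ^ j)
          = ((j.factorial : ℝ))⁻¹ • ((A ^ j).mulVec x) := f.map_smul _ _
      rw [hf, hpow j, smul_smul]
      rfl
    have hreal : HasSum (fun j : ℕ => (((j.factorial : ℝ))⁻¹ • ρ ^ j) • x)
        ((Real.exp ρ) • x) := by
      have h := NormedSpace.exp_series_hasSum_exp' (𝕂 := ℝ) ρ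
      rw [← Real.exp_eq_exp_ℝ] at h
      exact h.smul_const x
    have h4 : HasSum (fun j : ℕ => (((j.factorial : ℝ))⁻¹ • ρ ^ j) • x)
        (f (NormedSpace.exp A)) := by
      refine HasSum.congr_fun h2 ?_
      intro j
      exact (h3 j).symm
    exact (h4.unique hreal)
  · intro μ hμ hne
    rw [hspec] at hne ⊢
    rw [hroots] at hμ
    obtain ⟨a, ha, rfl⟩ := Multiset.mem_map.mp hμ
    have hane : a ≠ (ρ : ℂ) := by
      intro h
      rw [h, ← hofreal] at hne
      exact hne rfl
    exact habslt a ha hane
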